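/- Let A be a finite dimensional Hopf algebra with bijective antipode, right integral t, and right modular function α (so at = α(a)t). Then the Nakayama automorphism given by ν(a) = S̄²(a ↼ α), where a ↼ α = Σ α(a₁)a₂ and S̄ = S^{-1}, satisfies ν²(a) = S̄⁴(a) ↼ α² for all a ∈ A; in particular if S⁴ = id and α² = ε then ν² = id. -/

import Mathlib

open TensorProduct

noncomputable section

open Coalgebra

namespace Nak

variable {k : Type*} [Field k] {A : Type*} [Ring A] [HopfAlgebra k A]
variable {B : Type*} [Ring B] [Algebra k B]

/-- Convolution product of linear maps from a coalgebra to an algebra. -/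
def conv (f g : A →ₗ[k] B) : A →ₗ[k] B :=
  LinearMap.mul' k B ∘ₗ TensorProduct.map f g ∘ₗ Coalgebra.comul

/-- Convolution unit. -/
def cunit : A →ₗ[k] B := Algebra.linearMap k B ∘ₗ Coalgebra.counit

lemma conv_repr {ι : Type*} (f g : A →ₗ[k] B) {a : A} (r : Coalgebra.Repr k a ι) :
    conv f g a = ∑ i ∈ r.index, f (r.left i) * g (r.right i) := by
  simp only [conv, LinearMap.comp_apply, ← r.eq, map_sum, TensorProduct.map_tmul,
    LinearMap.mul'_apply]

lemma cunit_apply (a : A) : (cunit : A →ₗ[k] B) a = counit (R := k) a • 1 := by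
  simp [cunit, Algebra.smul_def]

lemma sum_counit_smul {ι : Type*} (a : A) (r : Coalgebra.Repr k a ι) :
    ∑ i ∈ r.index, counit (R := k) (r.left i) • r.right i = a := by
  have h := congrArg (TensorProduct.lid k A) (sum_counit_tmul_eq r)
  simp only [map_sum, lid_tmul, one_smul] at h
  exact h

lemma sum_smul_counit {ι : Type*} (a : A) (r : Coalgebra.Repr k a ι) :
    ∑ i ∈ r.index, counit (R := k) (r.right i) • r.left i = a := by
  have h := congrArg (TensorProduct.rid k A) (sum_tmul_counit_eq r)
  simp only [map_sum, rid_tmul, one_smul] at h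
  exact h

lemma conv_cunit_left (f : A →ₗ[k] B) : conv cunit f = f := by
  ext a
  rw [conv_repr _ _ (ℛ k a)]
  simp only [cunit_apply, smul_mul_assoc, one_mul, ← map_smul, ← map_sum,
    LinearMap.coe_comp]
  rw [sum_counit_smul a (ℛ k a)]

lemma conv_cunit_right (f : A →ₗ[k] B) : conv f cunit = f := by
  ext a
  rw [conv_repr _ _ (ℛ k a)]
  simp only [cunit_apply, mul_smul_comm, mul_one, ← map_smul, ← map_sum,
    LinearMap.coe_comp]
  rw [sum_smul_counit a (ℛ k a)]

lemma conv_assoc (f g h : A →ₗ[k] B) : conv (conv f g) h = conv f (conv g h) := by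
  ext a
  set r := ℛ k a
  set a₁ : (i : A × A) → Coalgebra.Repr k (r.left i) (A × A) := fun i => ℛ k (r.left i)
  set a₂ : (i : A × A) → Coalgebra.Repr k (r.right i) (A × A) := fun i => ℛ k (r.right i)
  have key := sum_map_tmul_tmul_eq (R := k) f g h a (repr := r) (a₁ := a₁) (a₂ := a₂)
  have := congrArg (LinearMap.mul' k B ∘ₗ (LinearMap.mul' k B).lTensor B) key
  simp only [map_sum, LinearMap.comp_apply, LinearMap.lTensor_tmul,
    LinearMap.mul'_apply] at this
  rw [conv_repr _ _ r, conv_repr _ _ r]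
  calc ∑ i ∈ r.index, conv f g (r.left i) * h (r.right i)
      = ∑ i ∈ r.index, ∑ j ∈ (a₁ i).index,
          f ((a₁ i).left j) * (g ((a₁ i).right j) * h (r.right i)) := by
        refine Finset.sum_congr rfl fun i _ => ?_
        rw [conv_repr f g (a₁ i), Finset.sum_mul]
        simp [mul_assoc]
    _ = ∑ i ∈ r.index, ∑ j ∈ (a₂ i).index,
          f (r.left i) * (g ((a₂ i).left j) * h ((a₂ i).right j)) := this.symm
    _ = ∑ i ∈ r.index, f (r.left i) * conv g h (r.right i) := by
        refine Finset.sum_congr rfl fun i _ => ?_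
        rw [conv_repr g h (a₂ i), Finset.mul_sum]

local notation "S" => (HopfAlgebra.antipode (R := k) (A := A))

lemma counit_antipode_apply (a : A) :
    counit (R := k) (S a) = counit (R := k) a := by
  have h := congrArg (counit (R := k) (A := A))
    (HopfAlgebra.sum_antipode_mul_eq_smul (ℛ k a))
  simp only [map_sum, Bialgebra.counit_mul, map_smul, Bialgebra.counit_one,
    smul_eq_mul, mul_one] at h
  have h2 : counit (R := k) (S a) =
      ∑ i ∈ (ℛ k a).index,
        counit (R := k) (S ((ℛ k a).left i)) * counit (R := k) ((ℛ k a).right i) := by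
    conv_lhs => rw [← sum_smul_counit a (ℛ k a)]
    simp only [map_sum, map_smul, smul_eq_mul]
    exact Finset.sum_congr rfl fun i _ => by ring
  rw [h2, h]


/-- The twisted comultiplication `τ ∘ (S ⊗ S) ∘ Δ`. -/
def G2 : A →ₗ[k] A ⊗[k] A :=
  (TensorProduct.comm k A A).toLinearMap ∘ₗ TensorProduct.map S S ∘ₗ Coalgebra.comul

lemma big1 : conv (Coalgebra.comul ∘ₗ S) (Coalgebra.comul (R := k) (A := A)) = cunit := by
  ext a
  rw [conv_repr _ _ (ℛ k a)]
  have h : ∑ i ∈ (ℛ k a).index,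
        (Coalgebra.comul ∘ₗ S) ((ℛ k a).left i) * Coalgebra.comul ((ℛ k a).right i)
      = Coalgebra.comul (R := k)
          (∑ i ∈ (ℛ k a).index, S ((ℛ k a).left i) * (ℛ k a).right i) := by
    simp only [map_sum, LinearMap.comp_apply, Bialgebra.comul_mul]
  rw [h, HopfAlgebra.sum_antipode_mul_eq_smul, map_smul, Bialgebra.comul_one,
    cunit_apply]

/-- Key 3-leg computation. -/
lemma sub1 {ι : Type*} (c l : A) (rl : Coalgebra.Repr k l ι) :
    ∑ j ∈ rl.index,
      Coalgebra.comul (R := k) (rl.left j) * (S c ⊗ₜ[k] S (rl.right j)) =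
    (l * S c) ⊗ₜ[k] (1 : A) := by
  classical
  set Z : A ⊗[k] (A ⊗[k] A) →ₗ[k] A ⊗[k] A :=
    TensorProduct.map (LinearMap.mulRight k (S c))
      (LinearMap.mul' k A ∘ₗ LinearMap.lTensor A S) with hZ
  have key := sum_tmul_tmul_eq rl (fun j => ℛ k (rl.left j)) (fun j => ℛ k (rl.right j))
  have key2 := congrArg Z key
  simp only [map_sum, hZ, TensorProduct.map_tmul, LinearMap.comp_apply,
    LinearMap.lTensor_tmul, LinearMap.mul'_apply, LinearMap.mulRight_apply] at key2
  calc ∑ j ∈ rl.index,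
        Coalgebra.comul (R := k) (rl.left j) * (S c ⊗ₜ[k] S (rl.right j))
      = ∑ j ∈ rl.index, ∑ n ∈ (ℛ k (rl.left j)).index,
          ((ℛ k (rl.left j)).left n * S c) ⊗ₜ[k]
            ((ℛ k (rl.left j)).right n * S (rl.right j)) := by
        refine Finset.sum_congr rfl fun j _ => ?_
        rw [← (ℛ k (rl.left j)).eq, Finset.sum_mul]
        simp [Algebra.TensorProduct.tmul_mul_tmul]
    _ = ∑ j ∈ rl.index, ∑ n ∈ (ℛ k (rl.right j)).index,
          (rl.left j * S c) ⊗ₜ[k]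
            ((ℛ k (rl.right j)).left n * S ((ℛ k (rl.right j)).right n)) := key2
    _ = ∑ j ∈ rl.index, counit (R := k) (rl.right j) •
          ((rl.left j * S c) ⊗ₜ[k] (1 : A)) := by
        refine Finset.sum_congr rfl fun j _ => ?_
        rw [← TensorProduct.tmul_sum, HopfAlgebra.sum_mul_antipode_eq_smul,
          TensorProduct.tmul_smul]
    _ = (l * S c) ⊗ₜ[k] (1 : A) := by
        simp only [TensorProduct.smul_tmul', smul_mul_assoc]
        rw [← TensorProduct.sum_tmul]
        congr 1
        have h2 : ∑ a ∈ rl.index, counit (R := k) (rl.right a) • (rl.left a * S c)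
            = (∑ a ∈ rl.index, counit (R := k) (rl.right a) • rl.left a) * S c := by
          rw [Finset.sum_mul]
          exact Finset.sum_congr rfl fun i _ => (smul_mul_assoc _ _ _).symm
        rw [h2, sum_smul_counit l rl]


lemma big2 : conv (Coalgebra.comul (R := k) (A := A)) G2 = cunit := by
  ext a
  rw [conv_repr _ _ (ℛ k a)]
  set r := ℛ k a with hr
  -- V sends x ⊗ (y ⊗ z) to comul x * (S z ⊗ S y)
  set V : A ⊗[k] (A ⊗[k] A) →ₗ[k] A ⊗[k] A :=
    LinearMap.mul' k (A ⊗[k] A) ∘ₗ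
      TensorProduct.map Coalgebra.comul
        ((TensorProduct.comm k A A).toLinearMap ∘ₗ TensorProduct.map S S) with hV
  have key := sum_tmul_tmul_eq r (fun i => ℛ k (r.left i)) (fun i => ℛ k (r.right i))
  have key2 := congrArg V key
  simp only [map_sum, hV, LinearMap.comp_apply, TensorProduct.map_tmul,
    LinearEquiv.coe_coe, TensorProduct.comm_tmul, LinearMap.mul'_apply] at key2
  calc ∑ i ∈ r.index, Coalgebra.comul (R := k) (r.left i) * G2 (r.right i)
      = ∑ i ∈ r.index, ∑ m ∈ (ℛ k (r.right i)).index,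
          Coalgebra.comul (R := k) (r.left i) *
            (S ((ℛ k (r.right i)).right m) ⊗ₜ[k] S ((ℛ k (r.right i)).left m)) := by
        refine Finset.sum_congr rfl fun i _ => ?_
        rw [G2, LinearMap.comp_apply, LinearMap.comp_apply, ← (ℛ k (r.right i)).eq,
          map_sum, map_sum, Finset.mul_sum]
        exact Finset.sum_congr rfl fun m _ => by
          rw [TensorProduct.map_tmul, LinearEquiv.coe_coe, TensorProduct.comm_tmul]
    _ = ∑ i ∈ r.index, ∑ j ∈ (ℛ k (r.left i)).index,
          Coalgebra.comul (R := k) ((ℛ k (r.left i)).left j) *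
            (S (r.right i) ⊗ₜ[k] S ((ℛ k (r.left i)).right j)) := key2.symm
    _ = ∑ i ∈ r.index, (r.left i * S (r.right i)) ⊗ₜ[k] (1 : A) := by
        exact Finset.sum_congr rfl fun i _ => sub1 (r.right i) (r.left i) (ℛ k (r.left i))
    _ = cunit a := by
        rw [← TensorProduct.sum_tmul, HopfAlgebra.sum_mul_antipode_eq_smul,
          cunit_apply]
        simp [Algebra.TensorProduct.one_def, TensorProduct.smul_tmul']


lemma comul_antipode :
    Coalgebra.comul ∘ₗ S = (G2 : A →ₗ[k] A ⊗[k] A) := by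
  calc Coalgebra.comul ∘ₗ S = conv (Coalgebra.comul ∘ₗ S) cunit := (conv_cunit_right _).symm
    _ = conv (Coalgebra.comul ∘ₗ S) (conv Coalgebra.comul G2) := by rw [big2]
    _ = conv (conv (Coalgebra.comul ∘ₗ S) Coalgebra.comul) G2 := (conv_assoc _ _ _).symm
    _ = conv cunit G2 := by rw [big1]
    _ = G2 := conv_cunit_left _

/-- A Sweedler representation of `S a` obtained from one of `a`. -/
def antipodeRepr {ι : Type*} {a : A} (r : Coalgebra.Repr k a ι) : Coalgebra.Repr k (S a) ι where
  index := r.index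
  left i := S (r.right i)
  right i := S (r.left i)
  eq := by
    have h := congrArg (fun f : A →ₗ[k] A ⊗[k] A => f a) (comul_antipode (k := k) (A := A))
    simp only [LinearMap.comp_apply] at h
    rw [h, G2, LinearMap.comp_apply, LinearMap.comp_apply, ← r.eq, map_sum, map_sum]
    exact Finset.sum_congr rfl fun i _ => by
      rw [TensorProduct.map_tmul, LinearEquiv.coe_coe, TensorProduct.comm_tmul]

lemma comul_antipode_sq :
    Coalgebra.comul ∘ₗ (S ∘ₗ S) =
      TensorProduct.map (S ∘ₗ S) (S ∘ₗ S) ∘ₗ (Coalgebra.comul (R := k) (A := A)) := by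
  have h : (Coalgebra.comul (R := k) (A := A)) ∘ₗ (S ∘ₗ S) = (G2 ∘ₗ S : A →ₗ[k] A ⊗[k] A) := by
    rw [← comul_antipode]; rfl
  rw [h, G2]
  have h2 : ((TensorProduct.comm k A A).toLinearMap ∘ₗ TensorProduct.map S S ∘ₗ
      Coalgebra.comul) ∘ₗ S =
      (TensorProduct.comm k A A).toLinearMap ∘ₗ TensorProduct.map S S ∘ₗ
        (Coalgebra.comul ∘ₗ S) := by rfl
  rw [h2, comul_antipode, G2]
  ext a
  simp only [LinearMap.comp_apply]
  rw [← (ℛ k a).eq]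
  simp only [map_sum]
  exact Finset.sum_congr rfl fun i _ => by
    simp [TensorProduct.comm_tmul]

variable (α : A →ₐ[k] k)

lemma alpha_conv_right : conv α.toLinearMap (α.toLinearMap ∘ₗ S) = (cunit : A →ₗ[k] k) := by
  ext a
  rw [conv_repr _ _ (ℛ k a), cunit_apply]
  have h : ∑ i ∈ (ℛ k a).index,
      α.toLinearMap ((ℛ k a).left i) * (α.toLinearMap ∘ₗ S) ((ℛ k a).right i) =
      α (∑ i ∈ (ℛ k a).index, (ℛ k a).left i * S ((ℛ k a).right i)) := by
    rw [map_sum]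
    exact Finset.sum_congr rfl fun i _ => (map_mul α _ _).symm
  rw [h, HopfAlgebra.sum_mul_antipode_eq_smul, map_smul, map_one]

lemma alpha_conv_left : conv (α.toLinearMap ∘ₗ S) α.toLinearMap = (cunit : A →ₗ[k] k) := by
  ext a
  rw [conv_repr _ _ (ℛ k a), cunit_apply]
  have h : ∑ i ∈ (ℛ k a).index,
      (α.toLinearMap ∘ₗ S) ((ℛ k a).left i) * α.toLinearMap ((ℛ k a).right i) =
      α (∑ i ∈ (ℛ k a).index, S ((ℛ k a).left i) * (ℛ k a).right i) := by
    rw [map_sum]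
    exact Finset.sum_congr rfl fun i _ => (map_mul α _ _).symm
  rw [h, HopfAlgebra.sum_antipode_mul_eq_smul, map_smul, map_one]

lemma alphaS_conv_alphaS2 :
    conv (α.toLinearMap ∘ₗ S) (α.toLinearMap ∘ₗ S ∘ₗ S) = (cunit : A →ₗ[k] k) := by
  ext a
  rw [conv_repr _ _ (ℛ k a), cunit_apply]
  have h := conv_repr (α.toLinearMap ∘ₗ S) α.toLinearMap (antipodeRepr (ℛ k a))
  have h2 := congrArg (fun f : A →ₗ[k] k => f (S a)) (alpha_conv_left α)
  rw [h] at h2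
  rw [cunit_apply, counit_antipode_apply] at h2
  simp only [antipodeRepr, LinearMap.comp_apply] at h2 ⊢
  rw [← h2]
  exact Finset.sum_congr rfl fun i _ => mul_comm _ _

lemma alpha_S_sq : α.toLinearMap ∘ₗ S ∘ₗ S = (α.toLinearMap : A →ₗ[k] k) := by
  have : α.toLinearMap ∘ₗ S ∘ₗ S = conv cunit (α.toLinearMap ∘ₗ S ∘ₗ S) :=
    (conv_cunit_left _).symm
  rw [this, ← alpha_conv_right α, conv_assoc, alphaS_conv_alphaS2 α, conv_cunit_right]


section Sprime
variable (S' : A →ₗ[k] A)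

lemma comul_S'sq (hS'l : ∀ a : A, S' (S a) = a) (hS'r : ∀ a : A, S (S' a) = a) (b : A) :
    Coalgebra.comul (R := k) (S' (S' b)) =
      TensorProduct.map (S' ∘ₗ S') (S' ∘ₗ S') (Coalgebra.comul b) := by
  have hcomp : TensorProduct.map (S' ∘ₗ S') (S' ∘ₗ S') ∘ₗ
      TensorProduct.map (S ∘ₗ S) (S ∘ₗ S) = (LinearMap.id : A ⊗[k] A →ₗ[k] A ⊗[k] A) := by
    rw [← TensorProduct.map_comp]
    have : (S' ∘ₗ S') ∘ₗ (S ∘ₗ S) = (LinearMap.id : A →ₗ[k] A) := by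
      apply LinearMap.ext; intro x
      simp only [LinearMap.comp_apply, LinearMap.id_apply]
      rw [hS'l, hS'l]
    rw [this, TensorProduct.map_id]
  have e1 : S (S (S' (S' b))) = b := by rw [hS'r, hS'r]
  have h := congrArg (fun f : A →ₗ[k] A ⊗[k] A => f (S' (S' b)))
    (comul_antipode_sq (k := k) (A := A))
  simp only [LinearMap.comp_apply] at h
  rw [e1] at h
  have h2 := congrArg (TensorProduct.map (S' ∘ₗ S') (S' ∘ₗ S')) h
  rw [← LinearMap.comp_apply, ← LinearMap.comp_apply (TensorProduct.map _ _), hcomp] at h2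
  simpa using h2.symm

lemma alpha_S'sq (hS'r : ∀ a : A, S (S' a) = a) (b : A) :
    α (S' (S' b)) = α b := by
  have h := congrArg (fun f : A →ₗ[k] k => f (S' (S' b))) (alpha_S_sq α)
  simp only [LinearMap.comp_apply, AlgHom.toLinearMap_apply] at h
  rw [hS'r, hS'r] at h
  exact h.symm

end Sprime

/-- The right action of a functional. -/
def rAct' (φ : A →ₗ[k] k) : A →ₗ[k] A :=
  (TensorProduct.lid k A).toLinearMap ∘ₗ
    (TensorProduct.map φ LinearMap.id) ∘ₗ Coalgebra.comul

lemma rAct'_repr {ι : Type*} (φ : A →ₗ[k] k) {a : A} (r : Coalgebra.Repr k a ι) :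
    rAct' φ a = ∑ i ∈ r.index, φ (r.left i) • r.right i := by
  simp only [rAct', LinearMap.comp_apply, ← r.eq, map_sum, TensorProduct.map_tmul,
    LinearEquiv.coe_coe, TensorProduct.lid_tmul, LinearMap.id_coe, id_eq]

lemma rAct_commute_S'sq (S' : A →ₗ[k] A)
    (hS'l : ∀ a : A, S' (S a) = a) (hS'r : ∀ a : A, S (S' a) = a) (a : A) :
    rAct' α.toLinearMap (S' (S' a)) = S' (S' (rAct' α.toLinearMap a)) := by
  have h1 : rAct' α.toLinearMap (S' (S' a)) =
      ∑ i ∈ (ℛ k a).index,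
        α (S' (S' ((ℛ k a).left i))) • S' (S' ((ℛ k a).right i)) := by
    show ((TensorProduct.lid k A).toLinearMap ∘ₗ
      (TensorProduct.map α.toLinearMap LinearMap.id) ∘ₗ Coalgebra.comul) (S' (S' a)) = _
    rw [LinearMap.comp_apply, LinearMap.comp_apply, comul_S'sq S' hS'l hS'r a,
      ← (ℛ k a).eq]
    simp only [map_sum, TensorProduct.map_tmul, LinearMap.comp_apply,
      LinearEquiv.coe_coe, TensorProduct.lid_tmul, LinearMap.id_coe, id_eq,
      AlgHom.toLinearMap_apply]
  have h2 : S' (S' (rAct' α.toLinearMap a)) =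
      ∑ i ∈ (ℛ k a).index,
        α ((ℛ k a).left i) • S' (S' ((ℛ k a).right i)) := by
    rw [rAct'_repr α.toLinearMap (ℛ k a), map_sum, map_sum]
    simp only [map_smul, AlgHom.toLinearMap_apply]
  rw [h1, h2]
  exact Finset.sum_congr rfl fun i _ => by rw [alpha_S'sq α S' hS'r]

lemma rAct_rAct (a : A) :
    rAct' α.toLinearMap (rAct' α.toLinearMap a) =
      rAct' (conv α.toLinearMap α.toLinearMap) a := by
  classical
  set r := ℛ k a with hr
  set W : A ⊗[k] (A ⊗[k] A) →ₗ[k] A :=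
    (TensorProduct.lid k A).toLinearMap ∘ₗ
      TensorProduct.map α.toLinearMap
        ((TensorProduct.lid k A).toLinearMap ∘ₗ
          TensorProduct.map α.toLinearMap LinearMap.id) with hW
  have key := sum_tmul_tmul_eq r (fun i => ℛ k (r.left i)) (fun i => ℛ k (r.right i))
  have key2 := congrArg W key
  simp only [map_sum, hW, LinearMap.comp_apply, TensorProduct.map_tmul,
    LinearEquiv.coe_coe, TensorProduct.lid_tmul, LinearMap.id_coe, id_eq,
    AlgHom.toLinearMap_apply] at key2
  calc rAct' α.toLinearMap (rAct' α.toLinearMap a)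
      = ∑ i ∈ r.index, α (r.left i) •
          (∑ j ∈ (ℛ k (r.right i)).index,
            α ((ℛ k (r.right i)).left j) • (ℛ k (r.right i)).right j) := by
        rw [rAct'_repr α.toLinearMap r, map_sum]
        exact Finset.sum_congr rfl fun i _ => by
          rw [map_smul, rAct'_repr α.toLinearMap (ℛ k (r.right i))]
          rfl
    _ = ∑ i ∈ r.index, ∑ j ∈ (ℛ k (r.right i)).index,
          α (r.left i) • (α ((ℛ k (r.right i)).left j) • (ℛ k (r.right i)).right j) := by
        exact Finset.sum_congr rfl fun i _ => Finset.smul_sum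
    _ = ∑ i ∈ r.index, ∑ j ∈ (ℛ k (r.left i)).index,
          α ((ℛ k (r.left i)).left j) •
            (α ((ℛ k (r.left i)).right j) • r.right i) := key2.symm
    _ = ∑ i ∈ r.index, (conv α.toLinearMap α.toLinearMap) (r.left i) • r.right i := by
        refine Finset.sum_congr rfl fun i _ => ?_
        rw [conv_repr _ _ (ℛ k (r.left i)), Finset.sum_smul]
        exact Finset.sum_congr rfl fun j _ => by
          rw [smul_smul]
          rfl
    _ = rAct' (conv α.toLinearMap α.toLinearMap) a := (rAct'_repr _ r).symm

end Nak



/-- Let `A` be a finite dimensional Hopf algebra with bijective antipode `S`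
(with inverse `S̄`), right integral `t ≠ 0` and right modular function `α`
(an algebra homomorphism with `a·t = α(a)·t`).  The Nakayama automorphism
`ν(a) = S̄²(a ↼ α)`, where `a ↼ α = Σ α(a₁) a₂`, satisfies
`ν²(a) = S̄⁴(a) ↼ α²` (with `α²` the convolution square of `α`); in
particular if `S⁴ = id` and `α² = ε` then `ν² = id`. -/
theorem nakayama_square_formula
    (k : Type*) [Field k] (A : Type*) [Ring A] [HopfAlgebra k A]
    [FiniteDimensional k A]
    (S' : A →ₗ[k] A)
    (hS'l : ∀ a : A, S' ((HopfAlgebra.antipode k : A →ₗ[k] A) a) = a)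
    (hS'r : ∀ a : A, (HopfAlgebra.antipode k : A →ₗ[k] A) (S' a) = a)
    (α : A →ₐ[k] k) (t : A) (ht : t ≠ 0)
    (hint : ∀ a : A, a * t = α a • t) :
    let rAct : (A →ₗ[k] k) → A →ₗ[k] A := fun φ =>
      (TensorProduct.lid k A).toLinearMap ∘ₗ
        (TensorProduct.map φ LinearMap.id) ∘ₗ Coalgebra.comul
    let α2 : A →ₗ[k] k :=
      (LinearMap.mul' k k) ∘ₗ
        (TensorProduct.map α.toLinearMap α.toLinearMap) ∘ₗ Coalgebra.comul
    let ν : A → A := fun a => S' (S' (rAct α.toLinearMap a))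
    (∀ a : A, ν (ν a) = rAct α2 (S' (S' (S' (S' a))))) ∧
    ((∀ a : A, (HopfAlgebra.antipode k : A →ₗ[k] A)
        ((HopfAlgebra.antipode k : A →ₗ[k] A)
          ((HopfAlgebra.antipode k : A →ₗ[k] A)
            ((HopfAlgebra.antipode k : A →ₗ[k] A) a))) = a) →
      (∀ a : A, α2 a = Coalgebra.counit (R := k) a) →
      ∀ a : A, ν (ν a) = a) := by
  intro rAct α2 ν
  have commute := Nak.rAct_commute_S'sq α S' hS'l hS'r
  have rr := Nak.rAct_rAct α
  set αL := α.toLinearMap with hαL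
  have hα2 : α2 = Nak.conv αL αL := rfl
  have main : ∀ a : A, ν (ν a) = rAct α2 (S' (S' (S' (S' a)))) := by
    intro a
    have lhs : ν (ν a) = S' (S' (S' (S' (Nak.rAct' (Nak.conv αL αL) a)))) := by
      calc ν (ν a) = S' (S' (Nak.rAct' αL (S' (S' (Nak.rAct' αL a))))) := rfl
        _ = S' (S' (S' (S' (Nak.rAct' αL (Nak.rAct' αL a))))) := by
            rw [commute (Nak.rAct' αL a)]
        _ = S' (S' (S' (S' (Nak.rAct' (Nak.conv αL αL) a)))) := by rw [rr]
    have rhs : rAct α2 (S' (S' (S' (S' a)))) =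
        S' (S' (S' (S' (Nak.rAct' (Nak.conv αL αL) a)))) := by
      calc rAct α2 (S' (S' (S' (S' a))))
          = Nak.rAct' αL (Nak.rAct' αL (S' (S' (S' (S' a))))) := by
            show Nak.rAct' (Nak.conv αL αL) (S' (S' (S' (S' a)))) = _
            rw [← rr]
        _ = Nak.rAct' αL (S' (S' (Nak.rAct' αL (S' (S' a))))) := by
            rw [commute (S' (S' a))]
        _ = S' (S' (Nak.rAct' αL (Nak.rAct' αL (S' (S' a))))) := by
            rw [commute (Nak.rAct' αL (S' (S' a)))]
        _ = S' (S' (Nak.rAct' αL (S' (S' (Nak.rAct' αL a))))) := by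
            rw [commute a]
        _ = S' (S' (S' (S' (Nak.rAct' αL (Nak.rAct' αL a))))) := by
            rw [commute (Nak.rAct' αL a)]
        _ = S' (S' (S' (S' (Nak.rAct' (Nak.conv αL αL) a)))) := by rw [rr]
    rw [lhs, rhs]
  refine ⟨main, ?_⟩
  intro hS4 hae a
  have h4 : S' (S' (S' (S' a))) = a := by
    have h := hS4 (S' (S' (S' (S' a))))
    rw [hS'r, hS'r, hS'r, hS'r] at h
    exact h.symm
  have hEq : α2 = (Coalgebra.counit : A →ₗ[k] k) := LinearMap.ext hae
  rw [main a, h4]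
  show Nak.rAct' α2 a = a
  rw [hEq, Nak.rAct'_repr _ (ℛ k a)]
  exact Nak.sum_counit_smul a (ℛ k a)

end
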